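/- Let D be an oriented knot diagram with n ≥ 1 crossings, modeled by a Gauss code g. Then d(D) + d(−D) + 1 = n if and only if D is an alternating diagram. -/
import Mathlib


open Polynomial Finset

/-- An oriented knot diagram with `n` crossings, modeled by its oriented Gauss code. -/
structure GaussCode (n : ℕ) where
  g : ZMod (2 * n) → Fin n × Bool
  o : Fin n → ZMod (2 * n)
  u : Fin n → ZMod (2 * n)
  over_iff : ∀ (c : Fin n) (e : ZMod (2 * n)), g e = (c, true) ↔ e = o c
  under_iff : ∀ (c : Fin n) (e : ZMod (2 * n)), g e = (c, false) ↔ e = u c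

namespace GaussCode

variable {n : ℕ}

/-- The warping degree of the base position `e`: the number of crossings whose
under-passage occurs strictly before its over-passage when traversing the diagram
starting at `e`. -/
def d (D : GaussCode n) (e : ZMod (2 * n)) : ℕ :=
  (Finset.univ.filter fun c : Fin n => (D.u c - e).val < (D.o c - e).val).card

/-- The warping crossing polynomial. -/
noncomputable def Xpoly (D : GaussCode n) : Polynomial ℤ :=
  ∑ c : Fin n, Polynomial.X ^ D.d (D.o c)

/-- The warping polynomial. -/
noncomputable def Wpoly (D : GaussCode n) : Polynomial ℤ :=
  ∑ k ∈ Finset.range (2 * n), Polynomial.X ^ D.d (k : ZMod (2 * n))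

/-- The warping degree of the diagram: minimum over all base positions. -/
noncomputable def wdeg (D : GaussCode n) : ℕ :=
  sInf (Set.range fun e : ZMod (2 * n) => D.d e)

/-- The diagram is alternating. -/
def Alternating (D : GaussCode n) : Prop :=
  ∀ e : ZMod (2 * n), (D.g e).2 ≠ (D.g (e + 1)).2

end GaussCode


namespace GaussCode

variable {n : ℕ}

lemma g_o' (D : GaussCode n) (c : Fin n) : D.g (D.o c) = (c, true) :=
  (D.over_iff c _).2 rfl

lemma g_u' (D : GaussCode n) (c : Fin n) : D.g (D.u c) = (c, false) :=
  (D.under_iff c _).2 rfl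

lemma u_ne_o' (D : GaussCode n) (c : Fin n) : D.u c ≠ D.o c := by
  intro hh
  have h1 := D.g_u' c
  rw [hh, D.g_o' c] at h1
  simp at h1

lemma val_pred {m : ℕ} [NeZero m] {y : ZMod m} (hy : y ≠ 0) : (y - 1).val = y.val - 1 := by
  have h1 : 0 < y.val := ZMod.val_pos.2 hy
  have h3 := ZMod.val_lt y
  have h2 : y - 1 = ((y.val - 1 : ℕ) : ZMod m) := by
    rw [Nat.cast_sub h1, ZMod.natCast_rightInverse y]; simp
  rw [h2, ZMod.val_cast_of_lt (by omega)]

lemma val_neg'' {m : ℕ} [NeZero m] {y : ZMod m} (hy : y ≠ 0) : (-y).val = m - y.val := by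
  haveI : NeZero y := ⟨hy⟩
  exact ZMod.val_neg_of_ne_zero y

lemma val_ne_of_ne {m : ℕ} [NeZero m] {y z : ZMod m} (hyz : y ≠ z) : y.val ≠ z.val := by
  intro hv
  apply hyz
  rw [← ZMod.natCast_rightInverse y, ← ZMod.natCast_rightInverse z, hv]

/-- Step lemma, over case. -/
lemma d_succ_over (hn : 1 ≤ n) (D : GaussCode n) (e : ZMod (2*n))
    (he : (D.g e).2 = true) : D.d (e + 1) = D.d e + 1 := by
  haveI : NeZero (2*n) := ⟨by omega⟩
  set c0 := (D.g e).1 with hc0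
  have hge : D.g e = (c0, true) := by rw [← he]
  have heo : e = D.o c0 := (D.over_iff c0 e).1 hge
  have hu0 : ∀ c, D.u c - e ≠ 0 := by
    intro c hcc
    have : D.u c = e := by rwa [sub_eq_zero] at hcc
    have h2 := D.g_u' c
    rw [this, hge] at h2
    simp at h2
  have ho0 : ∀ c, D.o c - e = 0 ↔ c = c0 := by
    intro c
    constructor
    · intro hcc
      have : D.o c = e := by rwa [sub_eq_zero] at hcc
      have h2 := D.g_o' c
      rw [this, hge] at h2
      exact (Prod.mk.injEq _ _ _ _ ▸ h2).1.symm
    · intro hcc; rw [hcc, ← heo, sub_self]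
  have ha : ∀ x : ZMod (2*n), x - (e+1) = (x - e) - 1 := fun x => by ring
  have key : ∀ c, ((D.u c - (e+1)).val < (D.o c - (e+1)).val) ↔
      (c = c0 ∨ (D.u c - e).val < (D.o c - e).val) := by
    intro c
    rw [ha (D.u c), ha (D.o c)]
    by_cases hc : c = c0
    · subst hc
      have hz : D.o c0 - e = 0 := (ho0 c0).2 rfl
      rw [hz, zero_sub]
      have hy := val_pred (hu0 c0)
      have hyv := ZMod.val_lt (D.u c0 - e)
      have hne : (-1 : ZMod (2*n)).val = 2*n - 1 := by
        have h1o : ((1 : ZMod (2*n))).val = 1 := by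
          haveI : Fact (1 < 2*n) := ⟨by omega⟩
          exact ZMod.val_one _
        have : (1 : ZMod (2*n)) ≠ 0 := by
          intro hh; rw [hh] at h1o; simp at h1o
        rw [val_neg'' this, h1o]
      rw [hy, hne]
      have hyp : 0 < (D.u c0 - e).val := ZMod.val_pos.2 (hu0 c0)
      constructor
      · intro _; exact Or.inl (by trivial)
      · intro _; omega
    · have hz : D.o c - e ≠ 0 := fun hh => hc ((ho0 c).1 hh)
      rw [val_pred (hu0 c), val_pred hz]
      have hyp : 0 < (D.u c - e).val := ZMod.val_pos.2 (hu0 c)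
      have hzp : 0 < (D.o c - e).val := ZMod.val_pos.2 hz
      constructor
      · intro hh; exact Or.inr (by omega)
      · rintro (hh | hh)
        · exact absurd hh hc
        · omega
  have hsplit : (Finset.univ.filter fun c : Fin n => (D.u c - (e+1)).val < (D.o c - (e+1)).val)
      = insert c0 (Finset.univ.filter fun c : Fin n => (D.u c - e).val < (D.o c - e).val) := by
    ext c
    simp only [mem_filter, mem_insert, mem_univ, true_and]
    rw [key c]
  have hc0notin : c0 ∉ (Finset.univ.filter fun c : Fin n => (D.u c - e).val < (D.o c - e).val) := by
    simp only [mem_filter, mem_univ, true_and]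
    have hz : D.o c0 - e = 0 := (ho0 c0).2 rfl
    rw [hz]
    simp
  show _ = _
  unfold d
  rw [hsplit, Finset.card_insert_of_notMem hc0notin]

/-- Step lemma, under case. -/
lemma d_succ_under (hn : 1 ≤ n) (D : GaussCode n) (e : ZMod (2*n))
    (he : (D.g e).2 = false) : D.d e = D.d (e + 1) + 1 := by
  haveI : NeZero (2*n) := ⟨by omega⟩
  set c0 := (D.g e).1 with hc0
  have hge : D.g e = (c0, false) := by rw [← he]
  have heu : e = D.u c0 := (D.under_iff c0 e).1 hge
  have ho0 : ∀ c, D.o c - e ≠ 0 := by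
    intro c hcc
    have : D.o c = e := by rwa [sub_eq_zero] at hcc
    have h2 := D.g_o' c
    rw [this, hge] at h2
    simp at h2
  have hu0 : ∀ c, D.u c - e = 0 ↔ c = c0 := by
    intro c
    constructor
    · intro hcc
      have : D.u c = e := by rwa [sub_eq_zero] at hcc
      have h2 := D.g_u' c
      rw [this, hge] at h2
      exact (Prod.mk.injEq _ _ _ _ ▸ h2).1.symm
    · intro hcc; rw [hcc, ← heu, sub_self]
  have ha : ∀ x : ZMod (2*n), x - (e+1) = (x - e) - 1 := fun x => by ring
  have key : ∀ c, ((D.u c - e).val < (D.o c - e).val) ↔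
      (c = c0 ∨ (D.u c - (e+1)).val < (D.o c - (e+1)).val) := by
    intro c
    rw [ha (D.u c), ha (D.o c)]
    by_cases hc : c = c0
    · subst hc
      have hy : D.u c0 - e = 0 := (hu0 c0).2 rfl
      rw [hy]
      have hzp : 0 < (D.o c0 - e).val := ZMod.val_pos.2 (ho0 c0)
      simp only [ZMod.val_zero]
      constructor
      · intro _; exact Or.inl (by trivial)
      · intro _; omega
    · have hy : D.u c - e ≠ 0 := fun hh => hc ((hu0 c).1 hh)
      rw [val_pred hy, val_pred (ho0 c)]
      have hyp : 0 < (D.u c - e).val := ZMod.val_pos.2 hy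
      have hzp : 0 < (D.o c - e).val := ZMod.val_pos.2 (ho0 c)
      constructor
      · intro hh; exact Or.inr (by omega)
      · rintro (hh | hh)
        · exact absurd hh hc
        · omega
  have hsplit : (Finset.univ.filter fun c : Fin n => (D.u c - e).val < (D.o c - e).val)
      = insert c0 (Finset.univ.filter fun c : Fin n => (D.u c - (e+1)).val < (D.o c - (e+1)).val) := by
    ext c
    simp only [mem_filter, mem_insert, mem_univ, true_and]
    rw [key c]
  have hc0notin : c0 ∉ (Finset.univ.filter fun c : Fin n =>
      (D.u c - (e+1)).val < (D.o c - (e+1)).val) := by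
    simp only [mem_filter, mem_univ, true_and]
    rw [ha (D.u c0), ha (D.o c0)]
    have hy : D.u c0 - e = 0 := (hu0 c0).2 rfl
    rw [hy, zero_sub]
    have hne : (-1 : ZMod (2*n)).val = 2*n - 1 := by
      have h1o : ((1 : ZMod (2*n))).val = 1 := by
        haveI : Fact (1 < 2*n) := ⟨by omega⟩
        exact ZMod.val_one _
      have : (1 : ZMod (2*n)) ≠ 0 := by
        intro hh; rw [hh] at h1o; simp at h1o
      rw [val_neg'' this, h1o]
    rw [hne, val_pred (ho0 c0)]
    have := ZMod.val_lt (D.o c0 - e)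
    omega
  show _ = _
  unfold d
  rw [hsplit, Finset.card_insert_of_notMem hc0notin]

lemma o_reverse (D Dm : GaussCode n) (h : ∀ e : ZMod (2 * n), Dm.g e = D.g (-e)) (c : Fin n) :
    Dm.o c = -(D.o c) := by
  have h1 : Dm.g (-(D.o c)) = (c, true) := by rw [h, neg_neg, D.g_o']
  exact ((Dm.over_iff c _).1 h1).symm

lemma u_reverse (D Dm : GaussCode n) (h : ∀ e : ZMod (2 * n), Dm.g e = D.g (-e)) (c : Fin n) :
    Dm.u c = -(D.u c) := by
  have h1 : Dm.g (-(D.u c)) = (c, false) := by rw [h, neg_neg, D.g_u']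
  exact ((Dm.under_iff c _).1 h1).symm

lemma sum_over (hn : 1 ≤ n) (D Dm : GaussCode n)
    (h : ∀ e : ZMod (2 * n), Dm.g e = D.g (-e)) (a : ZMod (2*n))
    (ha : (D.g a).2 = true) : D.d a + Dm.d (-a) + 1 = n := by
  haveI : NeZero (2*n) := ⟨by omega⟩
  set c0 := (D.g a).1 with hc0
  have hga : D.g a = (c0, true) := by rw [← ha]
  have hao : a = D.o c0 := (D.over_iff c0 a).1 hga
  have hu0 : ∀ c, D.u c - a ≠ 0 := by
    intro c hcc
    have : D.u c = a := by rwa [sub_eq_zero] at hcc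
    have h2 := D.g_u' c
    rw [this, hga] at h2
    simp at h2
  have ho0 : ∀ c, D.o c - a = 0 ↔ c = c0 := by
    intro c
    constructor
    · intro hcc
      have : D.o c = a := by rwa [sub_eq_zero] at hcc
      have h2 := D.g_o' c
      rw [this, hga] at h2
      exact (Prod.mk.injEq _ _ _ _ ▸ h2).1.symm
    · intro hcc; rw [hcc, ← hao, sub_self]
  have hrw : ∀ x : ZMod (2*n), -x - (-a) = -(x - a) := fun x => by ring
  have hmd : Dm.d (-a) =
      (Finset.univ.filter fun c : Fin n => (-(D.u c - a)).val < (-(D.o c - a)).val).card := by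
    unfold d
    congr 1
    apply Finset.filter_congr
    intro c _
    rw [u_reverse D Dm h c, o_reverse D Dm h c, hrw, hrw]
  have key : ∀ c, (¬ ((D.u c - a).val < (D.o c - a).val)) ↔
      (c = c0 ∨ (-(D.u c - a)).val < (-(D.o c - a)).val) := by
    intro c
    by_cases hc : c = c0
    · subst hc
      have hz : D.o c0 - a = 0 := (ho0 c0).2 rfl
      rw [hz]
      simp
    · have hz : D.o c - a ≠ 0 := fun hh => hc ((ho0 c).1 hh)
      have hy := hu0 c
      have hvne : (D.u c - a).val ≠ (D.o c - a).val := by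
        apply val_ne_of_ne
        intro hh
        exact D.u_ne_o' c (by rwa [sub_left_inj] at hh)
      rw [val_neg'' hy, val_neg'' hz]
      have h1 := ZMod.val_lt (D.u c - a)
      have h2 := ZMod.val_lt (D.o c - a)
      have h3 : 0 < (D.u c - a).val := ZMod.val_pos.2 hy
      have h4 : 0 < (D.o c - a).val := ZMod.val_pos.2 hz
      constructor
      · intro hh; exact Or.inr (by omega)
      · rintro (hh | hh)
        · exact absurd hh hc
        · omega
  have hsplit : (Finset.univ.filter fun c : Fin n => ¬ ((D.u c - a).val < (D.o c - a).val))
      = insert c0 (Finset.univ.filter fun c : Fin n =>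
          (-(D.u c - a)).val < (-(D.o c - a)).val) := by
    ext c
    simp only [mem_filter, mem_insert, mem_univ, true_and]
    rw [key c]
  have hc0notin : c0 ∉ (Finset.univ.filter fun c : Fin n =>
      (-(D.u c - a)).val < (-(D.o c - a)).val) := by
    simp only [mem_filter, mem_univ, true_and]
    have hz : D.o c0 - a = 0 := (ho0 c0).2 rfl
    rw [hz]
    simp
  have htot := Finset.card_filter_add_card_filter_not
    (s := (Finset.univ : Finset (Fin n)))
    (p := fun c : Fin n => (D.u c - a).val < (D.o c - a).val)
  rw [Finset.card_univ, Fintype.card_fin] at htot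
  have hins := Finset.card_insert_of_notMem hc0notin
  rw [← hsplit] at hins
  rw [hmd]
  unfold d
  omega

lemma sum_under (hn : 1 ≤ n) (D Dm : GaussCode n)
    (h : ∀ e : ZMod (2 * n), Dm.g e = D.g (-e)) (a : ZMod (2*n))
    (ha : (D.g a).2 = false) : D.d a + Dm.d (-a) = n + 1 := by
  haveI : NeZero (2*n) := ⟨by omega⟩
  set c0 := (D.g a).1 with hc0
  have hga : D.g a = (c0, false) := by rw [← ha]
  have hau : a = D.u c0 := (D.under_iff c0 a).1 hga
  have ho0 : ∀ c, D.o c - a ≠ 0 := by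
    intro c hcc
    have : D.o c = a := by rwa [sub_eq_zero] at hcc
    have h2 := D.g_o' c
    rw [this, hga] at h2
    simp at h2
  have hu0 : ∀ c, D.u c - a = 0 ↔ c = c0 := by
    intro c
    constructor
    · intro hcc
      have : D.u c = a := by rwa [sub_eq_zero] at hcc
      have h2 := D.g_u' c
      rw [this, hga] at h2
      exact (Prod.mk.injEq _ _ _ _ ▸ h2).1.symm
    · intro hcc; rw [hcc, ← hau, sub_self]
  have hrw : ∀ x : ZMod (2*n), -x - (-a) = -(x - a) := fun x => by ring
  have hmd : Dm.d (-a) =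
      (Finset.univ.filter fun c : Fin n => (-(D.u c - a)).val < (-(D.o c - a)).val).card := by
    unfold d
    congr 1
    apply Finset.filter_congr
    intro c _
    rw [u_reverse D Dm h c, o_reverse D Dm h c, hrw, hrw]
  have key : ∀ c, ((-(D.u c - a)).val < (-(D.o c - a)).val) ↔
      (c = c0 ∨ ¬ ((D.u c - a).val < (D.o c - a).val)) := by
    intro c
    by_cases hc : c = c0
    · subst hc
      have hy : D.u c0 - a = 0 := (hu0 c0).2 rfl
      have hz := ho0 c0
      have hzn : -(D.o c0 - a) ≠ 0 := neg_ne_zero.2 hz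
      have h4 : 0 < (-(D.o c0 - a)).val := ZMod.val_pos.2 hzn
      rw [hy]
      simp only [neg_zero, ZMod.val_zero]
      constructor
      · intro _; exact Or.inl (by trivial)
      · intro _; omega
    · have hy : D.u c - a ≠ 0 := fun hh => hc ((hu0 c).1 hh)
      have hz := ho0 c
      have hvne : (D.u c - a).val ≠ (D.o c - a).val := by
        apply val_ne_of_ne
        intro hh
        exact D.u_ne_o' c (by rwa [sub_left_inj] at hh)
      rw [val_neg'' hy, val_neg'' hz]
      have h1 := ZMod.val_lt (D.u c - a)
      have h2 := ZMod.val_lt (D.o c - a)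
      have h3 : 0 < (D.u c - a).val := ZMod.val_pos.2 hy
      have h4 : 0 < (D.o c - a).val := ZMod.val_pos.2 hz
      constructor
      · intro hh; exact Or.inr (by omega)
      · rintro (hh | hh)
        · exact absurd hh hc
        · omega
  have hsplit : (Finset.univ.filter fun c : Fin n => (-(D.u c - a)).val < (-(D.o c - a)).val)
      = insert c0 (Finset.univ.filter fun c : Fin n =>
          ¬ ((D.u c - a).val < (D.o c - a).val)) := by
    ext c
    simp only [mem_filter, mem_insert, mem_univ, true_and]
    rw [key c]
  have hc0notin : c0 ∉ (Finset.univ.filter fun c : Fin n =>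
      ¬ ((D.u c - a).val < (D.o c - a).val)) := by
    simp only [mem_filter, mem_univ, true_and, not_not]
    have hy : D.u c0 - a = 0 := (hu0 c0).2 rfl
    rw [hy]
    simpa using ZMod.val_pos.2 (ho0 c0)
  have htot := Finset.card_filter_add_card_filter_not
    (s := (Finset.univ : Finset (Fin n)))
    (p := fun c : Fin n => (D.u c - a).val < (D.o c - a).val)
  rw [Finset.card_univ, Fintype.card_fin] at htot
  have hins := Finset.card_insert_of_notMem hc0notin
  rw [← hsplit] at hins
  rw [hmd]
  unfold d
  omega

lemma card_overs [NeZero (2*n)] (D : GaussCode n) :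
    (Finset.univ.filter fun e : ZMod (2*n) => (D.g e).2 = true).card = n := by
  have hinj : Function.Injective D.o := by
    intro c c' hcc
    have h1 := D.g_o' c
    rw [hcc, D.g_o' c'] at h1
    exact (Prod.mk.injEq _ _ _ _ ▸ h1).1.symm
  have himg : (Finset.univ.filter fun e : ZMod (2*n) => (D.g e).2 = true)
      = Finset.univ.image D.o := by
    ext e
    simp only [mem_filter, mem_univ, true_and, mem_image]
    constructor
    · intro he
      refine ⟨(D.g e).1, ?_⟩
      have h2 : D.g e = ((D.g e).1, true) := by rw [← he]
      exact ((D.over_iff _ e).1 h2).symm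
    · rintro ⟨c, rfl⟩
      rw [D.g_o']
  rw [himg, Finset.card_image_of_injective _ hinj, Finset.card_univ, Fintype.card_fin]

lemma card_unders [NeZero (2*n)] (D : GaussCode n) :
    (Finset.univ.filter fun e : ZMod (2*n) => (D.g e).2 = false).card = n := by
  have hinj : Function.Injective D.u := by
    intro c c' hcc
    have h1 := D.g_u' c
    rw [hcc, D.g_u' c'] at h1
    exact (Prod.mk.injEq _ _ _ _ ▸ h1).1.symm
  have himg : (Finset.univ.filter fun e : ZMod (2*n) => (D.g e).2 = false)
      = Finset.univ.image D.u := by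
    ext e
    simp only [mem_filter, mem_univ, true_and, mem_image]
    constructor
    · intro he
      refine ⟨(D.g e).1, ?_⟩
      have h2 : D.g e = ((D.g e).1, false) := by rw [← he]
      exact ((D.under_iff _ e).1 h2).symm
    · rintro ⟨c, rfl⟩
      rw [D.g_u']
  rw [himg, Finset.card_image_of_injective _ hinj, Finset.card_univ, Fintype.card_fin]

end GaussCode

/-- **Theorem (Shimizu).** For a knot diagram `D` with `n ≥ 1` crossings,
`d(D) + d(−D) + 1 = n` holds iff `D` is alternating. -/
theorem wdeg_add_wdeg_reverse_add_one_eq_iff_alternating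
    (n : ℕ) (hn : 1 ≤ n) (D Dm : GaussCode n)
    (h : ∀ e : ZMod (2 * n), Dm.g e = D.g (-e)) :
    D.wdeg + Dm.wdeg + 1 = n ↔ D.Alternating := by
  haveI : NeZero (2*n) := ⟨by omega⟩
  haveI : Nonempty (ZMod (2*n)) := ⟨0⟩
  have hwle : ∀ e : ZMod (2*n), D.wdeg ≤ D.d e := fun e => Nat.sInf_le ⟨e, rfl⟩
  have hwmle : ∀ e : ZMod (2*n), Dm.wdeg ≤ Dm.d e := fun e => Nat.sInf_le ⟨e, rfl⟩
  obtain ⟨a0, ha0⟩ : ∃ a0 : ZMod (2*n), D.d a0 = D.wdeg := by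
    have hmem := Nat.sInf_mem (Set.range_nonempty fun e : ZMod (2*n) => D.d e)
    rw [Set.mem_range] at hmem
    exact hmem
  have ha0over : (D.g a0).2 = true := by
    cases hb : (D.g a0).2
    · exfalso
      have hstep := GaussCode.d_succ_under hn D a0 hb
      have hle := hwle (a0 + 1)
      omega
    · rfl
  constructor
  · intro heq
    have hover_d : ∀ a, (D.g a).2 = true → D.d a = D.wdeg := by
      intro a ha
      have hsum := GaussCode.sum_over hn D Dm h a ha
      have h1 := hwle a
      have h2 := hwmle (-a)
      omega
    have hnotwo : ∀ a, (D.g a).2 = true → (D.g (a+1)).2 = false := by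
      intro a ha
      cases hb : (D.g (a+1)).2
      · rfl
      · exfalso
        have hstep := GaussCode.d_succ_over hn D a ha
        have e1 := hover_d a ha
        have e2 := hover_d (a+1) hb
        omega
    have himgU : (Finset.univ.filter fun e : ZMod (2*n) => (D.g e).2 = true).image (· + 1)
        = (Finset.univ.filter fun e : ZMod (2*n) => (D.g e).2 = false) := by
      apply Finset.eq_of_subset_of_card_le
      · intro b hb
        obtain ⟨a, haS, rfl⟩ := Finset.mem_image.1 hb
        simp only [Finset.mem_filter, Finset.mem_univ, true_and] at haS ⊢
        exact hnotwo a haS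
      · rw [GaussCode.card_unders D,
          Finset.card_image_of_injective _ (add_left_injective (1 : ZMod (2*n))),
          GaussCode.card_overs D]
    intro e
    cases he : (D.g e).2
    · cases hb : (D.g (e+1)).2
      · exfalso
        have hmem : (e+1) ∈ (Finset.univ.filter fun x : ZMod (2*n) => (D.g x).2 = false) := by
          simp only [Finset.mem_filter, Finset.mem_univ, true_and]
          exact hb
        rw [← himgU] at hmem
        obtain ⟨a, haS, hae⟩ := Finset.mem_image.1 hmem
        have hax : a = e := add_right_cancel hae
        subst hax
        simp only [Finset.mem_filter, Finset.mem_univ, true_and] at haS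
        rw [he] at haS
        exact absurd haS (by simp)
      · simp
    · rw [hnotwo e he]; simp
  · intro halt
    have step2 : ∀ e, (D.g e).2 = true → (D.g (e+2)).2 = true ∧ D.d (e+2) = D.d e := by
      intro e he
      have h1 : (D.g (e+1)).2 = false := by
        have hne := halt e
        rw [he] at hne
        cases hb : (D.g (e+1)).2
        · rfl
        · rw [hb] at hne; exact absurd rfl hne
      have he2 : e + 1 + 1 = e + 2 := by ring
      have h2 : (D.g (e+2)).2 = true := by
        have hne := halt (e+1)
        rw [h1, he2] at hne
        cases hb : (D.g (e+2)).2
        · rw [hb] at hne; exact absurd rfl hne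
        · rfl
      have s1 := GaussCode.d_succ_over hn D e he
      have s2 := GaussCode.d_succ_under hn D (e+1) h1
      rw [he2] at s2
      exact ⟨h2, by omega⟩
    have stepk : ∀ k : ℕ, (D.g (a0 + ((2*k : ℕ) : ZMod (2*n)))).2 = true ∧
        D.d (a0 + ((2*k : ℕ) : ZMod (2*n))) = D.d a0 := by
      intro k
      induction k with
      | zero =>
        constructor
        · simpa using ha0over
        · simp
      | succ k ih =>
        obtain ⟨ih1, ih2⟩ := ih
        have hrw2 : a0 + ((2*(k+1) : ℕ) : ZMod (2*n)) = (a0 + ((2*k : ℕ) : ZMod (2*n))) + 2 := by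
          push_cast; ring
        have hs := step2 _ ih1
        rw [hrw2]
        exact ⟨hs.1, hs.2.trans ih2⟩
    have hconst : ∀ a, (D.g a).2 = true → D.d a = D.d a0 := by
      intro a ha
      have hTsub : (Finset.range n).image (fun k : ℕ => a0 + ((2*k : ℕ) : ZMod (2*n)))
          ⊆ (Finset.univ.filter fun e : ZMod (2*n) => (D.g e).2 = true) := by
        intro x hx
        obtain ⟨k, hk, rfl⟩ := Finset.mem_image.1 hx
        simp only [Finset.mem_filter, Finset.mem_univ, true_and]
        exact (stepk k).1
      have hTcard : ((Finset.range n).image fun k : ℕ => a0 + ((2*k : ℕ) : ZMod (2*n))).card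
          = n := by
        rw [Finset.card_image_of_injOn, Finset.card_range]
        intro k hk k' hk' hkk
        simp only [Finset.mem_coe, Finset.mem_range] at hk hk'
        have hcast : ((2*k : ℕ) : ZMod (2*n)) = ((2*k' : ℕ) : ZMod (2*n)) :=
          add_left_cancel hkk
        have hv1 := ZMod.val_cast_of_lt (show 2*k < 2*n by omega)
        have hv2 := ZMod.val_cast_of_lt (show 2*k' < 2*n by omega)
        rw [hcast] at hv1
        omega
      have hST : (Finset.range n).image (fun k : ℕ => a0 + ((2*k : ℕ) : ZMod (2*n)))
          = (Finset.univ.filter fun e : ZMod (2*n) => (D.g e).2 = true) :=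
        Finset.eq_of_subset_of_card_le hTsub
          (by rw [GaussCode.card_overs D, hTcard])
      have haS : a ∈ (Finset.univ.filter fun e : ZMod (2*n) => (D.g e).2 = true) := by
        simp only [Finset.mem_filter, Finset.mem_univ, true_and]
        exact ha
      rw [← hST] at haS
      obtain ⟨k, hk, hak⟩ := Finset.mem_image.1 haS
      rw [← hak]
      exact (stepk k).2
    have hDm_lb : ∀ b : ZMod (2*n), n ≤ Dm.d b + D.d a0 + 1 := by
      intro b
      have hb : -(-b) = b := neg_neg b
      cases hgb : (D.g (-b)).2
      · have hsum := GaussCode.sum_under hn D Dm h (-b) hgb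
        rw [hb] at hsum
        have hprev : (D.g (-b - 1)).2 = true := by
          have hne := halt (-b - 1)
          have hx : -b - 1 + 1 = -b := by ring
          rw [hx, hgb] at hne
          cases hb2 : (D.g (-b-1)).2
          · rw [hb2] at hne; exact absurd rfl hne
          · rfl
        have hstep := GaussCode.d_succ_over hn D (-b - 1) hprev
        have hx : -b - 1 + 1 = -b := by ring
        rw [hx] at hstep
        have hcc := hconst (-b - 1) hprev
        omega
      · have hsum := GaussCode.sum_over hn D Dm h (-b) hgb
        rw [hb] at hsum
        have hcc := hconst (-b) hgb
        omega
    obtain ⟨b0, hb0⟩ : ∃ b0 : ZMod (2*n), Dm.d b0 = Dm.wdeg := by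
      have hmem := Nat.sInf_mem (Set.range_nonempty fun e : ZMod (2*n) => Dm.d e)
      rw [Set.mem_range] at hmem
      exact hmem
    have hub := hwmle (-a0)
    have hsum0 := GaussCode.sum_over hn D Dm h a0 ha0over
    have hlb0 := hDm_lb b0
    omega
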